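/- Let w, f : [a,b] → ℝ be differentiable with w' = ν ≥ 0, let ψ : [0,1] → [0,1], λ ∈ [0,1]. Define K(t,x) = w(t) - (w(a)+ψ(λ)(w(b)-w(a))/2) for t ∈ [a,x) and K(t,x) = w(t) - (w(a)+(1+ψ(1-λ))(w(b)-w(a))/2) for t ∈ [x,b]. Then for all x ∈ [a,b]: | [((1+ψ(1-λ)-ψ(λ))/(2(b-a)))·f(x) + (ψ(λ)f(a)+(1-ψ(1-λ))f(b))/(2(b-a))]·∫_a^b w'(t) dt − (1/(b-a))·∫_a^b w'(t)f(t) dt − ((f(b)-f(a))/(b-a)²)·∫_a^b K(t,x) dt | ≤ [ (1/(b-a))·∫_a^b K(t,x)² dt − ((1/(b-a))·∫_a^b K(t,x) dt)² ]^{1/2} · [ (1/(b-a))·∫_a^b f'(t)² dt − ((1/(b-a))·∫_a^b f'(t) dt)² ]^{1/2}. -/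

import Mathlib

open MeasureTheory intervalIntegral Set

lemma sqrt_pull (c X Y : ℝ) (hc : 0 ≤ c) : c * (Real.sqrt X * Real.sqrt Y)
    = Real.sqrt (c * X) * Real.sqrt (c * Y) := by
  rw [Real.sqrt_mul hc, Real.sqrt_mul hc]
  have h := Real.mul_self_sqrt hc
  linear_combination (-(Real.sqrt X * Real.sqrt Y)) * h

lemma cs_interval (a b : ℝ) (hab : a ≤ b) (p q : ℝ → ℝ)
    (hp2 : IntervalIntegrable (fun t => p t ^ 2) volume a b)
    (hq2 : IntervalIntegrable (fun t => q t ^ 2) volume a b)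
    (hpq : IntervalIntegrable (fun t => p t * q t) volume a b) :
    (∫ t in a..b, p t * q t) ^ 2
      ≤ (∫ t in a..b, p t ^ 2) * (∫ t in a..b, q t ^ 2) := by
  set A := ∫ t in a..b, p t ^ 2 with hA
  set B := ∫ t in a..b, p t * q t with hB
  set C := ∫ t in a..b, q t ^ 2 with hC
  have key : ∀ r : ℝ, 0 ≤ A * (r * r) + (2 * B) * r + C := by
    intro r
    have h2 : (0:ℝ) ≤ ∫ t in a..b, (r * p t + q t) ^ 2 :=
      intervalIntegral.integral_nonneg hab (fun t _ => sq_nonneg _)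
    have h3 : (∫ t in a..b, (r * p t + q t) ^ 2)
        = r ^ 2 * A + 2 * r * B + C := by
      have h1 : (fun t => (r * p t + q t) ^ 2)
          = fun t => (r ^ 2 * p t ^ 2 + 2 * r * (p t * q t)) + q t ^ 2 := by
        funext t; ring
      rw [h1, integral_add (((hp2.const_mul _).add (hpq.const_mul _))) hq2,
        integral_add (hp2.const_mul _) (hpq.const_mul _),
        intervalIntegral.integral_const_mul, intervalIntegral.integral_const_mul]
    nlinarith [h2, h3]
  have hd := discrim_le_zero key
  rw [discrim] at hd
  nlinarith [hd]

lemma gruss (a b : ℝ) (hab : a < b) (g h : ℝ → ℝ)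
    (hg : IntervalIntegrable g volume a b) (hh : IntervalIntegrable h volume a b)
    (hg2 : IntervalIntegrable (fun t => g t ^ 2) volume a b)
    (hh2 : IntervalIntegrable (fun t => h t ^ 2) volume a b)
    (hgh : IntervalIntegrable (fun t => g t * h t) volume a b) :
    |(1/(b-a)) * (∫ t in a..b, g t * h t)
        - ((1/(b-a)) * ∫ t in a..b, g t) * ((1/(b-a)) * ∫ t in a..b, h t)|
      ≤ Real.sqrt ((1/(b-a)) * (∫ t in a..b, g t ^ 2)
            - ((1/(b-a)) * ∫ t in a..b, g t) ^ 2)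
        * Real.sqrt ((1/(b-a)) * (∫ t in a..b, h t ^ 2)
            - ((1/(b-a)) * ∫ t in a..b, h t) ^ 2) := by
  have hL : (0:ℝ) < b - a := sub_pos.mpr hab
  set L : ℝ := b - a with hLdef
  set gb : ℝ := (1/L) * ∫ t in a..b, g t with hgb
  set hb : ℝ := (1/L) * ∫ t in a..b, h t with hhb
  have hIg : ∫ t in a..b, g t = L * gb := by rw [hgb]; field_simp
  have hIh : ∫ t in a..b, h t = L * hb := by rw [hhb]; field_simp
  set p : ℝ → ℝ := fun t => g t - gb with hp
  set q : ℝ → ℝ := fun t => h t - hb with hq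
  have hp2e : (fun t => p t ^ 2) = fun t => (g t ^ 2 - 2 * gb * g t) + gb ^ 2 := by
    funext t; simp only [hp]; ring
  have hq2e : (fun t => q t ^ 2) = fun t => (h t ^ 2 - 2 * hb * h t) + hb ^ 2 := by
    funext t; simp only [hq]; ring
  have hpqe : (fun t => p t * q t)
      = fun t => ((g t * h t - hb * g t) - gb * h t) + gb * hb := by
    funext t; simp only [hp, hq]; ring
  have hp2i : IntervalIntegrable (fun t => p t ^ 2) volume a b := by
    rw [hp2e]; exact (hg2.sub (hg.const_mul _)).add intervalIntegrable_const
  have hq2i : IntervalIntegrable (fun t => q t ^ 2) volume a b := by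
    rw [hq2e]; exact (hh2.sub (hh.const_mul _)).add intervalIntegrable_const
  have hpqi : IntervalIntegrable (fun t => p t * q t) volume a b := by
    rw [hpqe]
    exact ((hgh.sub (hg.const_mul _)).sub (hh.const_mul _)).add intervalIntegrable_const
  have hIp2 : ∫ t in a..b, p t ^ 2 = (∫ t in a..b, g t ^ 2) - L * gb ^ 2 := by
    rw [hp2e, integral_add (hg2.sub (hg.const_mul _)) intervalIntegrable_const,
      integral_sub hg2 (hg.const_mul _), intervalIntegral.integral_const_mul, hIg, intervalIntegral.integral_const]
    simp only [smul_eq_mul]; ring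
  have hIq2 : ∫ t in a..b, q t ^ 2 = (∫ t in a..b, h t ^ 2) - L * hb ^ 2 := by
    rw [hq2e, integral_add (hh2.sub (hh.const_mul _)) intervalIntegrable_const,
      integral_sub hh2 (hh.const_mul _), intervalIntegral.integral_const_mul, hIh, intervalIntegral.integral_const]
    simp only [smul_eq_mul]; ring
  have hIpq : ∫ t in a..b, p t * q t = (∫ t in a..b, g t * h t) - L * (gb * hb) := by
    rw [hpqe, integral_add ((hgh.sub (hg.const_mul _)).sub (hh.const_mul _))
        intervalIntegrable_const,
      integral_sub (hgh.sub (hg.const_mul _)) (hh.const_mul _),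
      integral_sub hgh (hg.const_mul _), intervalIntegral.integral_const_mul, intervalIntegral.integral_const_mul,
      hIg, hIh, intervalIntegral.integral_const]
    simp only [smul_eq_mul]; ring
  have hcs := cs_interval a b hab.le p q hp2i hq2i hpqi
  have hp2nn : (0:ℝ) ≤ ∫ t in a..b, p t ^ 2 :=
    intervalIntegral.integral_nonneg hab.le (fun t _ => sq_nonneg _)
  have hq2nn : (0:ℝ) ≤ ∫ t in a..b, q t ^ 2 :=
    intervalIntegral.integral_nonneg hab.le (fun t _ => sq_nonneg _)
  have e1 : (1/L) * (∫ t in a..b, g t * h t) - gb * hb = (1/L) * ∫ t in a..b, p t * q t := by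
    rw [hIpq]; field_simp
  have e2 : (1/L) * (∫ t in a..b, g t ^ 2) - gb ^ 2 = (1/L) * ∫ t in a..b, p t ^ 2 := by
    rw [hIp2]; field_simp
  have e3 : (1/L) * (∫ t in a..b, h t ^ 2) - hb ^ 2 = (1/L) * ∫ t in a..b, q t ^ 2 := by
    rw [hIq2]; field_simp
  rw [e1, e2, e3]
  have habs : |(1/L) * ∫ t in a..b, p t * q t|
      = (1/L) * |∫ t in a..b, p t * q t| := by
    rw [abs_mul, abs_of_pos (by positivity : (0:ℝ) < 1/L)]
  rw [habs]
  have h1 : |∫ t in a..b, p t * q t|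
      ≤ Real.sqrt ((∫ t in a..b, p t ^ 2) * ∫ t in a..b, q t ^ 2) := by
    rw [← Real.sqrt_sq_eq_abs]
    exact Real.sqrt_le_sqrt hcs
  calc (1/L) * |∫ t in a..b, p t * q t|
      ≤ (1/L) * Real.sqrt ((∫ t in a..b, p t ^ 2) * ∫ t in a..b, q t ^ 2) := by
        apply mul_le_mul_of_nonneg_left h1 (by positivity)
    _ = Real.sqrt ((1/L) * ∫ t in a..b, p t ^ 2)
        * Real.sqrt ((1/L) * ∫ t in a..b, q t ^ 2) := by
        rw [Real.sqrt_mul hp2nn]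
        exact sqrt_pull (1/L) _ _ (by positivity)

theorem weighted_ostrowski_gruss_real
    (a b : ℝ) (hab : a < b) (w ν f f' : ℝ → ℝ) (ψ : ℝ → ℝ) (lam : ℝ)
    (hw : ∀ t ∈ Set.Icc a b, HasDerivAt w (ν t) t)
    (hνc : ContinuousOn ν (Set.Icc a b))
    (hν0 : ∀ t ∈ Set.Icc a b, 0 ≤ ν t)
    (hf : ∀ t ∈ Set.Icc a b, HasDerivAt f (f' t) t)
    (hf'c : ContinuousOn f' (Set.Icc a b))
    (hψ : ∀ s ∈ Set.Icc (0:ℝ) 1, ψ s ∈ Set.Icc (0:ℝ) 1)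
    (hlam : lam ∈ Set.Icc (0:ℝ) 1)
    (K : ℝ → ℝ → ℝ)
    (hK : ∀ x, ∀ t, K t x =
      if t < x then w t - (w a + ψ lam * (w b - w a) / 2)
      else w t - (w a + (1 + ψ (1 - lam)) * (w b - w a) / 2)) :
    ∀ x ∈ Set.Icc a b,
      |((1 + ψ (1 - lam) - ψ lam) / (2 * (b - a)) * f x
            + (ψ lam * f a + (1 - ψ (1 - lam)) * f b) / (2 * (b - a)))
            * (∫ t in a..b, ν t)
          - (1 / (b - a)) * (∫ t in a..b, ν t * f t)
          - (f b - f a) / (b - a) ^ 2 * ∫ t in a..b, K t x|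
        ≤ Real.sqrt ((1 / (b - a)) * (∫ t in a..b, (K t x) ^ 2)
              - ((1 / (b - a)) * ∫ t in a..b, K t x) ^ 2)
          * Real.sqrt ((1 / (b - a)) * (∫ t in a..b, (f' t) ^ 2)
              - ((1 / (b - a)) * ∫ t in a..b, f' t) ^ 2) := by
  intro x hx
  obtain ⟨hax, hxb⟩ := hx
  have hwc : ContinuousOn w (Set.Icc a b) :=
    fun t ht => (hw t ht).continuousAt.continuousWithinAt
  have hfc : ContinuousOn f (Set.Icc a b) :=
    fun t ht => (hf t ht).continuousAt.continuousWithinAt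
  set c₁ : ℝ := w a + ψ lam * (w b - w a) / 2 with hc₁
  set c₂ : ℝ := w a + (1 + ψ (1 - lam)) * (w b - w a) / 2 with hc₂
  have hsub1 : Set.uIcc a x ⊆ Set.Icc a b := by
    rw [Set.uIcc_of_le hax]; exact Set.Icc_subset_Icc le_rfl hxb
  have hsub2 : Set.uIcc x b ⊆ Set.Icc a b := by
    rw [Set.uIcc_of_le hxb]; exact Set.Icc_subset_Icc hax le_rfl
  have hsub : Set.uIcc a b ⊆ Set.Icc a b := by rw [Set.uIcc_of_le hab.le]
  -- continuity of the two branches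
  have hg1c : ContinuousOn (fun t => w t - c₁) (Set.Icc a b) := hwc.sub continuousOn_const
  have hg2c : ContinuousOn (fun t => w t - c₂) (Set.Icc a b) := hwc.sub continuousOn_const
  -- K agrees with branch 1 a.e. on Ι a x
  have hne : ∀ᵐ t : ℝ ∂MeasureTheory.volume, t ≠ x := by
    rw [MeasureTheory.ae_iff]
    have : {t : ℝ | ¬ t ≠ x} = {x} := by ext t; simp
    rw [this]; exact Real.volume_singleton
  have hKae : ∀ᵐ t ∂(MeasureTheory.volume.restrict (Set.uIoc a x)),
      K t x = w t - c₁ := by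
    have hmem := MeasureTheory.ae_restrict_mem (α := ℝ)
      (μ := MeasureTheory.volume) (measurableSet_uIoc (a := a) (b := x))
    filter_upwards [MeasureTheory.ae_restrict_of_ae hne, hmem] with t ht1 ht2
    rw [Set.uIoc_of_le hax] at ht2
    rw [hK x t, if_pos (lt_of_le_of_ne ht2.2 ht1)]
  -- K agrees with branch 2 exactly on uIcc x b
  have hKeq2 : Set.EqOn (fun t => K t x) (fun t => w t - c₂) (Set.uIcc x b) := by
    intro t ht
    rw [Set.uIcc_of_le hxb] at ht
    simp only
    rw [hK x t, if_neg (not_lt.mpr ht.1)]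
  have hKc2 : ContinuousOn (fun t => K t x) (Set.uIcc x b) :=
    ((hg2c.mono hsub2)).congr hKeq2
  -- integrability of K and products on the two pieces
  have hint1 : ∀ φ : ℝ → ℝ, ContinuousOn φ (Set.Icc a b) →
      (IntervalIntegrable (fun t => (w t - c₁) * φ t) MeasureTheory.volume a x ∧
       IntervalIntegrable (fun t => K t x * φ t) MeasureTheory.volume a x) := by
    intro φ hφ
    have h1 : IntervalIntegrable (fun t => (w t - c₁) * φ t) MeasureTheory.volume a x :=
      (((hg1c.mul hφ)).mono hsub1).intervalIntegrable
    refine ⟨h1, h1.congr_ae ?_⟩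
    filter_upwards [hKae] with t ht
    simp only [ht]
  have hint2 : ∀ φ : ℝ → ℝ, ContinuousOn φ (Set.Icc a b) →
      IntervalIntegrable (fun t => K t x * φ t) MeasureTheory.volume x b := by
    intro φ hφ
    exact (hKc2.mul (hφ.mono hsub2)).intervalIntegrable
  -- basic FTC facts
  have hIf' : (∫ t in a..b, f' t) = f b - f a :=
    intervalIntegral.integral_eq_sub_of_hasDerivAt (fun t ht => hf t (hsub ht))
      ((hf'c.mono hsub).intervalIntegrable)
  have hIν : (∫ t in a..b, ν t) = w b - w a :=
    intervalIntegral.integral_eq_sub_of_hasDerivAt (fun t ht => hw t (hsub ht))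
      ((hνc.mono hsub).intervalIntegrable)
  -- integration by parts on the two pieces
  have hibp1 : (∫ t in a..x, (w t - c₁) * f' t)
      = (w x - c₁) * f x - (w a - c₁) * f a - ∫ t in a..x, ν t * f t := by
    refine intervalIntegral.integral_mul_deriv_eq_deriv_mul
      (fun t ht => (hw t (hsub1 ht)).sub_const c₁)
      (fun t ht => hf t (hsub1 ht))
      ((hνc.mono hsub1).intervalIntegrable)
      ((hf'c.mono hsub1).intervalIntegrable)
  have hibp2 : (∫ t in x..b, (w t - c₂) * f' t)
      = (w b - c₂) * f b - (w x - c₂) * f x - ∫ t in x..b, ν t * f t := by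
    refine intervalIntegral.integral_mul_deriv_eq_deriv_mul
      (fun t ht => (hw t (hsub2 ht)).sub_const c₂)
      (fun t ht => hf t (hsub2 ht))
      ((hνc.mono hsub2).intervalIntegrable)
      ((hf'c.mono hsub2).intervalIntegrable)
  -- the splits
  have hνf : (∫ t in a..b, ν t * f t)
      = (∫ t in a..x, ν t * f t) + ∫ t in x..b, ν t * f t :=
    (intervalIntegral.integral_add_adjacent_intervals
      (((hνc.mul hfc).mono hsub1).intervalIntegrable)
      (((hνc.mul hfc).mono hsub2).intervalIntegrable)).symm
  have hKf'1 := hint1 f' hf'c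
  have hKf'2 := hint2 f' hf'c
  have hIK1 : (∫ t in a..x, K t x * f' t) = ∫ t in a..x, (w t - c₁) * f' t := by
    apply intervalIntegral.integral_congr_ae
    filter_upwards [hne] with t ht1 ht2
    rw [Set.uIoc_of_le hax] at ht2
    rw [hK x t, if_pos (lt_of_le_of_ne ht2.2 ht1)]
  have hIK2 : (∫ t in x..b, K t x * f' t) = ∫ t in x..b, (w t - c₂) * f' t :=
    intervalIntegral.integral_congr (fun t ht => by
      have := hKeq2 ht
      simp only at this
      simp only [this])
  have hIKf' : (∫ t in a..b, K t x * f' t)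
      = (c₂ - c₁) * f x + (c₁ - w a) * f a + (w b - c₂) * f b
        - ∫ t in a..b, ν t * f t := by
    rw [← intervalIntegral.integral_add_adjacent_intervals hKf'1.2 hKf'2, hIK1, hIK2,
      hibp1, hibp2, hνf]
    ring
  -- interval integrabilities for gruss
  have hKi : IntervalIntegrable (fun t => K t x) MeasureTheory.volume a b := by
    have h1 : IntervalIntegrable (fun t => K t x) MeasureTheory.volume a x := by
      have := (hint1 (fun _ => 1) continuousOn_const).2
      simpa using this
    exact h1.trans (hKc2.intervalIntegrable)
  have hK2i : IntervalIntegrable (fun t => (K t x) ^ 2) MeasureTheory.volume a b := by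
    have h1 : IntervalIntegrable (fun t => (K t x) ^ 2) MeasureTheory.volume a x := by
      have hcont : ContinuousOn (fun t => (w t - c₁) * (w t - c₁)) (Set.Icc a b) :=
        hg1c.mul hg1c
      have h2 : IntervalIntegrable (fun t => (w t - c₁) * (w t - c₁))
          MeasureTheory.volume a x := ((hcont.mono hsub1)).intervalIntegrable
      refine (h2.congr_ae ?_)
      filter_upwards [hKae] with t ht
      simp only [ht]; ring
    have h2 : IntervalIntegrable (fun t => (K t x) ^ 2) MeasureTheory.volume x b :=
      ((hKc2.mul hKc2).congr (fun t _ => by simp only [Pi.mul_apply]; ring)).intervalIntegrable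
    exact h1.trans h2
  have hKf'i : IntervalIntegrable (fun t => K t x * f' t) MeasureTheory.volume a b :=
    hKf'1.2.trans hKf'2
  have hf'i : IntervalIntegrable f' MeasureTheory.volume a b :=
    (hf'c.mono hsub).intervalIntegrable
  have hf'2i : IntervalIntegrable (fun t => (f' t) ^ 2) MeasureTheory.volume a b :=
    (((hf'c.mul hf'c).mono hsub).congr (fun t _ => by simp only [Pi.mul_apply]; ring)).intervalIntegrable
  -- apply the Grüss inequality
  have hgr := gruss a b hab (fun t => K t x) f' hKi hf'i hK2i hf'2i hKf'i
  have hEq : ((1 + ψ (1 - lam) - ψ lam) / (2 * (b - a)) * f x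
            + (ψ lam * f a + (1 - ψ (1 - lam)) * f b) / (2 * (b - a)))
            * (∫ t in a..b, ν t)
          - (1 / (b - a)) * (∫ t in a..b, ν t * f t)
          - (f b - f a) / (b - a) ^ 2 * ∫ t in a..b, K t x
      = (1/(b-a)) * (∫ t in a..b, K t x * f' t)
        - ((1/(b-a)) * ∫ t in a..b, K t x) * ((1/(b-a)) * ∫ t in a..b, f' t) := by
    rw [hIKf', hIf', hIν, hc₁, hc₂]
    have hba : b - a ≠ 0 := sub_ne_zero.mpr hab.ne'
    field_simp
    ring
  rw [hEq]
  exact hgr
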